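/- If a pure state ψ on A₁ ⊗ ⋯ ⊗ Aₙ is n-partite non-chiral (there exist unitaries U_{A₁},…,U_{Aₙ} with (⊗ᵢ U_{Aᵢ})ψ proportional to ψ*), then its reduced density matrix on A₁⋯A_{n−1} is (n−1)-partite non-chiral. -/
import Mathlib


open Matrix Kronecker BigOperators
open scoped ComplexOrder

noncomputable section

/-- Entrywise complex conjugation of a matrix (in the fixed basis). -/
def conjM {α : Type*} (ρ : Matrix α α ℂ) : Matrix α α ℂ := ρ.map (starRingEnd ℂ)

/-- A matrix is unitary. -/
def IsUnitary {α : Type*} [Fintype α] [DecidableEq α] (U : Matrix α α ℂ) : Prop :=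
  U * Uᴴ = 1 ∧ Uᴴ * U = 1

/-- A density matrix: positive semidefinite with unit trace. -/
def IsDensity {α : Type*} [Fintype α] [DecidableEq α] (ρ : Matrix α α ℂ) : Prop :=
  ρ.PosSemidef ∧ ρ.trace = 1

/-- Partial trace over the second tensor factor. -/
def traceB {α β : Type*} [Fintype β] (ρ : Matrix (α × β) (α × β) ℂ) : Matrix α α ℂ :=
  fun a a' => ∑ b, ρ (a, b) (a', b)

/-- Partial trace over the first tensor factor. -/
def traceA {α β : Type*} [Fintype α] (ρ : Matrix (α × β) (α × β) ℂ) : Matrix β β ℂ :=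
  fun b b' => ∑ a, ρ (a, b) (a, b')

/-- The tensor product of a family of local operators, acting on the product of the
subsystems `A₁, …, A_k`. -/
def piTensor {k : ℕ} {d : Fin k → ℕ} (U : (i : Fin k) → Matrix (Fin (d i)) (Fin (d i)) ℂ) :
    Matrix ((i : Fin k) → Fin (d i)) ((i : Fin k) → Fin (d i)) ℂ :=
  fun x y => ∏ i, U i (x i) (y i)

lemma piTensor_unitary {k : ℕ} {d : Fin k → ℕ}
    (U : (i : Fin k) → Matrix (Fin (d i)) (Fin (d i)) ℂ)
    (hU : ∀ i, (U i)ᴴ * U i = 1) :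
    (piTensor U)ᴴ * piTensor U = 1 := by
  ext x y
  simp only [Matrix.mul_apply, Matrix.conjTranspose_apply, piTensor]
  have h1 : ∀ z : (i : Fin k) → Fin (d i),
      star (∏ i, U i (z i) (x i)) * ∏ i, U i (z i) (y i)
        = ∏ i, star (U i (z i) (x i)) * U i (z i) (y i) := by
    intro z
    rw [show (star (∏ i, U i (z i) (x i))) = ∏ i, star (U i (z i) (x i)) from
      map_prod (starRingEnd ℂ) _ _, ← Finset.prod_mul_distrib]
  simp only [h1]
  rw [← Fintype.prod_sum (fun i t => star (U i t (x i)) * U i t (y i))]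
  have h2 : ∀ i, ∑ t, star (U i t (x i)) * U i t (y i)
      = (1 : Matrix (Fin (d i)) (Fin (d i)) ℂ) (x i) (y i) := by
    intro i
    rw [← hU i]
    simp [Matrix.mul_apply, Matrix.conjTranspose_apply]
  simp only [h2]
  by_cases h : x = y
  · simp [h, Matrix.one_apply]
  · rw [Matrix.one_apply_ne h]
    obtain ⟨i, hi⟩ := Function.ne_iff.mp h
    exact Finset.prod_eq_zero (Finset.mem_univ i) (Matrix.one_apply_ne hi)

lemma kron_conjTranspose {α β : Type*} (A : Matrix α α ℂ) (B : Matrix β β ℂ) :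
    (A ⊗ₖ B)ᴴ = Aᴴ ⊗ₖ Bᴴ := by
  ext ⟨a, b⟩ ⟨a', b'⟩
  simp [Matrix.conjTranspose_apply, Matrix.kroneckerMap_apply, mul_comm]

lemma sum_rot {A B C : Type*} [Fintype A] [Fintype B] [Fintype C]
    (f : A → B → C → ℂ) :
    ∑ p, ∑ q, ∑ b, f p q b = ∑ b, ∑ p, ∑ q, f p q b := by
  have step : ∀ p : A, ∑ q, ∑ b, f p q b = ∑ b, ∑ q, f p q b :=
    fun p => Finset.sum_comm
  simp only [step]
  exact Finset.sum_comm

lemma inner_pres {β : Type*} [Fintype β] [DecidableEq β] (V : Matrix β β ℂ)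
    (hV : Vᴴ * V = 1) (u w : β → ℂ) :
    star (V.mulVec w) ⬝ᵥ (V.mulVec u) = star w ⬝ᵥ u := by
  rw [Matrix.star_mulVec, Matrix.dotProduct_mulVec, Matrix.vecMul_vecMul, hV,
    Matrix.vecMul_one]

/-- if a pure state `ψ` on `A₁ ⊗ ⋯ ⊗ A_{k} ⊗ A_{k+1}` (the last factor being
`Fin m`) is `(k+1)`-partite non-chiral (up to proportionality), then its reduced density
matrix on `A₁⋯A_k` is `k`-partite non-chiral. -/
theorem stmt_2 {k m : ℕ} {d : Fin k → ℕ}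
    (ψ : (((i : Fin k) → Fin (d i)) × Fin m) → ℂ)
    (hψ : ∑ x, ‖ψ x‖ ^ 2 = 1)
    (hnc : ∃ (U : (i : Fin k) → Matrix (Fin (d i)) (Fin (d i)) ℂ)
        (V : Matrix (Fin m) (Fin m) ℂ) (c : ℂ),
      (∀ i, IsUnitary (U i)) ∧ IsUnitary V ∧
      (piTensor U ⊗ₖ V).mulVec ψ = c • fun x => starRingEnd ℂ (ψ x)) :
    ∃ W : (i : Fin k) → Matrix (Fin (d i)) (Fin (d i)) ℂ,
      (∀ i, IsUnitary (W i)) ∧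
      piTensor W * traceB (Matrix.vecMulVec ψ (star ψ)) * (piTensor W)ᴴ
        = conjM (traceB (Matrix.vecMulVec ψ (star ψ))) := by
  obtain ⟨U, V, c, hU, hV, hmul⟩ := hnc
  have hstar : ∀ z : ℂ, star z * z = ((‖z‖ ^ 2 : ℝ) : ℂ) := fun z => by
    rw [show (star z) = (starRingEnd ℂ) z from rfl, RCLike.conj_mul]; norm_cast
  have hψC : ∑ x, star (ψ x) * ψ x = (1 : ℂ) := by
    simp only [hstar]
    rw [← Complex.ofReal_sum, hψ, Complex.ofReal_one]
  have hM : ((piTensor U ⊗ₖ V)ᴴ * (piTensor U ⊗ₖ V)) = 1 := by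
    rw [kron_conjTranspose, ← Matrix.mul_kronecker_mul,
      piTensor_unitary U (fun i => (hU i).2), hV.2, Matrix.one_kronecker_one]
  have hc : star c * c = 1 := by
    have h1 := inner_pres _ hM ψ ψ
    rw [hmul] at h1
    simp only [dotProduct, Pi.star_apply, Pi.smul_apply, smul_eq_mul,
      starRingEnd_apply] at h1
    calc star c * c = star c * c * ∑ x, star (ψ x) * ψ x := by rw [hψC, mul_one]
      _ = ∑ x, star (c * star (ψ x)) * (c * star (ψ x)) := by
          rw [Finset.mul_sum]
          exact Finset.sum_congr rfl fun x _ => by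
            simp only [star_mul', star_star]; ring
      _ = 1 := by rw [h1, hψC]
  set M := piTensor U with hMdef
  set φ : ((i : Fin k) → Fin (d i)) → Fin m → ℂ :=
    fun a b => ∑ p, M a p * ψ (p, b) with hφ
  have h2 : ∀ a, V.mulVec (φ a) = fun b => c * star (ψ (a, b)) := by
    intro a
    funext b
    have := congrFun hmul (a, b)
    simp only [Matrix.mulVec, dotProduct, Fintype.sum_prod_type,
      Matrix.kroneckerMap_apply, Pi.smul_apply, smul_eq_mul, starRingEnd_apply] at this ⊢
    rw [← this, Finset.sum_comm]
    refine Finset.sum_congr rfl fun q _ => ?_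
    simp only [hφ]
    rw [Finset.mul_sum]
    exact Finset.sum_congr rfl fun p _ => by ring
  refine ⟨U, hU, ?_⟩
  ext a a'
  have lhs_eq : (M * traceB (Matrix.vecMulVec ψ (star ψ)) * Mᴴ) a a'
      = star (φ a') ⬝ᵥ φ a := by
    simp only [Matrix.mul_apply, Matrix.conjTranspose_apply, traceB,
      Matrix.vecMulVec_apply, Pi.star_apply, dotProduct, hφ]
    simp only [Finset.sum_mul, Finset.mul_sum, star_sum, star_mul', star_star]
    rw [sum_rot]
    refine Finset.sum_congr rfl fun b _ => ?_
    rw [Finset.sum_comm]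
    exact Finset.sum_congr rfl fun p _ => Finset.sum_congr rfl fun q _ => by ring
  rw [lhs_eq, ← inner_pres V hV.2 (φ a) (φ a'), h2, h2]
  simp only [conjM, Matrix.map_apply, traceB, Matrix.vecMulVec_apply, Pi.star_apply,
    dotProduct, starRingEnd_apply, star_sum, star_mul', star_star]
  refine Finset.sum_congr rfl fun b _ => ?_
  calc star c * ψ (a', b) * (c * star (ψ (a, b)))
      = (star c * c) * (ψ (a', b) * star (ψ (a, b))) := by ring
    _ = star (ψ (a, b)) * ψ (a', b) := by rw [hc, one_mul]; ring
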